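/- Let (X_n, A_n)_{n∈ℕ} be measurable spaces and (κ_n : ∏_{i≤n} X_i ⇝ X_{n+1})_{n∈ℕ} Markov kernels. For all a ≤ b in ℕ and every u ∈ ∏_{i≤a} X_i, the composition-product of the measure η_{a,b}(u) with the trajectory kernel ξ_b equals the pushforward of ξ_a(u) under the map y ↦ (π_b(y), y): η_{a,b}(u) ⊗ₘ ξ_b = (y ↦ (π_b(y), y))_* ξ_a(u), as probability measures on (∏_{i≤b} X_i) × (∏_{n∈ℕ} X_n). -/

import Mathlib

open MeasureTheory ProbabilityTheory Preorder Filter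
open scoped ENNReal ProbabilityTheory Topology

variable {X : ℕ → Type*} [∀ n, MeasurableSpace (X n)]

/-- Canonical map gluing a trajectory up to time `b` with a point of `X (b + 1)` into a
trajectory up to time `b + 1`. -/
def IicProdSucc (b : ℕ) (p : (Π i : Finset.Iic b, X i) × X (b + 1)) :
    Π i : Finset.Iic (b + 1), X i :=
  fun i ↦ if h : i.1 ≤ b then p.1 ⟨i.1, Finset.mem_Iic.2 h⟩
    else cast (congrArg X (Nat.le_antisymm (Finset.mem_Iic.1 i.2)
      (Nat.lt_of_not_le h))).symm p.2

/-- The partial trajectory kernel `η_{a,b}` built from the kernels `κ n`: for `b ≤ a` it is the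
deterministic kernel given by the restriction map, and `η_{a,b+1}` is obtained from `η_{a,b}` by
composing with the product of the identity kernel and `κ b`. -/
noncomputable def partialTraj (κ : ∀ n, Kernel (Π i : Finset.Iic n, X i) (X (n + 1))) (a : ℕ) :
    (b : ℕ) → Kernel (Π i : Finset.Iic a, X i) (Π i : Finset.Iic b, X i)
  | 0 => Kernel.deterministic (frestrictLe₂ (Nat.zero_le a)) (measurable_frestrictLe₂ _)
  | b + 1 =>
    if h : b + 1 ≤ a then Kernel.deterministic (frestrictLe₂ h) (measurable_frestrictLe₂ h)
    else ((Kernel.id ×ₖ κ b) ∘ₖ partialTraj κ a b).map (IicProdSucc b)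

lemma measurable_IicProdSucc (b : ℕ) : Measurable (IicProdSucc (X := X) b) := by
  refine measurable_pi_lambda _ fun i ↦ ?_
  by_cases h : i.1 ≤ b
  · simp only [IicProdSucc, dif_pos h]
    exact (measurable_pi_apply _).comp measurable_fst
  · simp only [IicProdSucc, dif_neg h]
    have he : i.1 = b + 1 := Nat.le_antisymm (Finset.mem_Iic.1 i.2) (Nat.lt_of_not_le h)
    exact (MeasurableEquiv.cast (congrArg X he).symm
      (by rw [he])).measurable.comp measurable_snd

lemma frestrictLe₂_rfl {a : ℕ} : frestrictLe₂ (π := X) (_root_.le_refl a) = id := rfl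

lemma partialTraj_le (κ : ∀ n, Kernel (Π i : Finset.Iic n, X i) (X (n + 1))) {a b : ℕ}
    (hba : b ≤ a) :
    partialTraj κ a b = Kernel.deterministic (frestrictLe₂ hba) (measurable_frestrictLe₂ hba) := by
  cases b with
  | zero => rfl
  | succ b => rw [partialTraj, dif_pos hba]

lemma partialTraj_self (κ : ∀ n, Kernel (Π i : Finset.Iic n, X i) (X (n + 1))) (a : ℕ) :
    partialTraj κ a a = Kernel.id := by
  rw [partialTraj_le κ le_rfl]; rfl

lemma isMarkovKernel_partialTraj (κ : ∀ n, Kernel (Π i : Finset.Iic n, X i) (X (n + 1)))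
    [∀ n, IsMarkovKernel (κ n)] (a b : ℕ) : IsMarkovKernel (partialTraj κ a b) := by
  induction b with
  | zero => rw [partialTraj]; infer_instance
  | succ b ih =>
    rw [partialTraj]
    split_ifs with h
    · infer_instance
    · exact Kernel.IsMarkovKernel.map _ (measurable_IicProdSucc b)

lemma kmap_map {α β γ δ : Type*} [MeasurableSpace α] [MeasurableSpace β] [MeasurableSpace γ]
    [MeasurableSpace δ] (κ : Kernel α β) {f : β → γ} {g : γ → δ}
    (hf : Measurable f) (hg : Measurable g) :
    (κ.map f).map g = κ.map (g ∘ f) := by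
  ext a
  rw [Kernel.map_apply _ hg, Kernel.map_apply _ hf, Kernel.map_apply _ (hg.comp hf),
    Measure.map_map hg hf]

lemma partialTraj_map_frestrictLe₂ (κ : ∀ n, Kernel (Π i : Finset.Iic n, X i) (X (n + 1)))
    [∀ n, IsMarkovKernel (κ n)] (a : ℕ) : ∀ {b c : ℕ} (hcb : c ≤ b),
    (partialTraj κ a b).map (frestrictLe₂ hcb) = partialTraj κ a c := by
  intro b
  induction b with
  | zero => intro c hcb
            obtain rfl : c = 0 := Nat.le_zero.1 hcb
            rw [frestrictLe₂_rfl, Kernel.map_id]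
  | succ b ih =>
    intro c hcb
    rcases Nat.lt_or_ge c (b + 1) with hc | hc
    · have hcb' : c ≤ b := Nat.lt_succ_iff.1 hc
      by_cases h : b + 1 ≤ a
      · rw [partialTraj_le κ h, ← Kernel.deterministic_comp_eq_map (measurable_frestrictLe₂ hcb),
          Kernel.deterministic_comp_deterministic,
          partialTraj_le κ (hcb.trans h)]
        rfl
      · rw [partialTraj, dif_neg h,
          kmap_map _ (measurable_IicProdSucc b) (measurable_frestrictLe₂ hcb)]
        have hfun : (frestrictLe₂ (π := X) hcb) ∘ (IicProdSucc b)
            = (frestrictLe₂ hcb') ∘ Prod.fst := by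
          funext p i
          simp only [Function.comp_apply, frestrictLe₂_apply, IicProdSucc,
            dif_pos ((Finset.mem_Iic.1 i.2).trans hcb')]
        rw [hfun, ← kmap_map _ measurable_fst (measurable_frestrictLe₂ hcb'),
          Kernel.map_comp, ← Kernel.fst_eq, Kernel.fst_prod, Kernel.id_comp, ih hcb']
    · obtain rfl : c = b + 1 := Nat.le_antisymm hcb hc
      rw [frestrictLe₂_rfl, Kernel.map_id]

lemma partialTraj_comp (κ : ∀ n, Kernel (Π i : Finset.Iic n, X i) (X (n + 1)))
    [∀ n, IsMarkovKernel (κ n)] {a b : ℕ} (hab : a ≤ b) :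
    ∀ c, partialTraj κ b c ∘ₖ partialTraj κ a b = partialTraj κ a c := by
  intro c
  induction c with
  | zero =>
    rw [partialTraj, partialTraj, Kernel.deterministic_comp_eq_map,
      partialTraj_map_frestrictLe₂ κ a (Nat.zero_le b)]
    exact (partialTraj_le κ (Nat.zero_le a)).symm
  | succ c ih =>
    by_cases h : c + 1 ≤ b
    · rw [partialTraj_le κ h, Kernel.deterministic_comp_eq_map,
        partialTraj_map_frestrictLe₂ κ a h]
    · have h' : ¬ c + 1 ≤ a := fun hh ↦ h (hh.trans hab)
      rw [partialTraj, dif_neg h, partialTraj, dif_neg h', ← Kernel.map_comp,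
        Kernel.comp_assoc, ih]

/-- The π-system of preimages of measurable sets under restriction maps. -/
def frestrictLeCylinders (X : ℕ → Type*) [∀ n, MeasurableSpace (X n)] : Set (Set (Π n, X n)) :=
  {s | ∃ (b : ℕ) (t : Set (Π i : Finset.Iic b, X i)), MeasurableSet t ∧ s = frestrictLe b ⁻¹' t}

lemma isPiSystem_frestrictLeCylinders : IsPiSystem (frestrictLeCylinders X) := by
  rintro s1 ⟨b, t, ht, rfl⟩ s2 ⟨c, s, hs, rfl⟩ _
  rcases le_total b c with h | h
  · exact ⟨c, (frestrictLe₂ h ⁻¹' t) ∩ s,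
      ((measurable_frestrictLe₂ h) ht).inter hs, rfl⟩
  · exact ⟨b, t ∩ (frestrictLe₂ h ⁻¹' s),
      ht.inter ((measurable_frestrictLe₂ h) hs), rfl⟩

lemma generateFrom_frestrictLeCylinders :
    MeasurableSpace.pi = MeasurableSpace.generateFrom (frestrictLeCylinders X) := by
  refine le_antisymm (iSup_le fun n ↦ ?_) ?_
  · rintro s ⟨t, ht, rfl⟩
    exact MeasurableSpace.measurableSet_generateFrom
      ⟨n, (fun y : Π i : Finset.Iic n, X i ↦ y ⟨n, Finset.mem_Iic.2 le_rfl⟩) ⁻¹' t,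
        measurable_pi_apply _ ht, rfl⟩
  · rw [MeasurableSpace.generateFrom_le_iff]
    rintro - ⟨b, t, ht, rfl⟩
    exact measurable_frestrictLe b ht

lemma traj_eq_comp (κ : ∀ n, Kernel (Π i : Finset.Iic n, X i) (X (n + 1)))
    [∀ n, IsMarkovKernel (κ n)]
    (ξ : ∀ n : ℕ, Kernel (Π i : Finset.Iic n, X i) (Π n, X n))
    (hξ : ∀ n, IsMarkovKernel (ξ n))
    (hchar : ∀ n b : ℕ, (ξ n).map (frestrictLe b) = partialTraj κ n b)
    {a b : ℕ} (hab : a ≤ b) (u : Π i : Finset.Iic a, X i) :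
    ξ a u = (ξ b ∘ₖ partialTraj κ a b) u := by
  haveI := hξ a
  haveI := hξ b
  haveI := isMarkovKernel_partialTraj κ a b
  refine ext_of_generate_finite _ generateFrom_frestrictLeCylinders
    isPiSystem_frestrictLeCylinders ?_ ?_
  · rintro - ⟨c, t, ht, rfl⟩
    have h1 : ξ a u (frestrictLe c ⁻¹' t) = partialTraj κ a c u t := by
      rw [← hchar a c, Kernel.map_apply' _ (measurable_frestrictLe c) _ ht]
    have h2 : (ξ b ∘ₖ partialTraj κ a b) u (frestrictLe c ⁻¹' t)
        = partialTraj κ a c u t := by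
      rw [← Kernel.map_apply' _ (measurable_frestrictLe c) _ ht, Kernel.map_comp,
        hchar b c, partialTraj_comp κ hab]
    rw [h1, h2]
  · simp

lemma traj_map_frestrictLe_self (κ : ∀ n, Kernel (Π i : Finset.Iic n, X i) (X (n + 1)))
    [∀ n, IsMarkovKernel (κ n)]
    (ξ : ∀ n : ℕ, Kernel (Π i : Finset.Iic n, X i) (Π n, X n))
    (hchar : ∀ n b : ℕ, (ξ n).map (frestrictLe b) = partialTraj κ n b)
    (b : ℕ) (y : Π i : Finset.Iic b, X i) :
    (ξ b y).map (frestrictLe b) = Measure.dirac y := by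
  have := hchar b b
  rw [partialTraj_self] at this
  rw [← Kernel.map_apply _ (measurable_frestrictLe b), this]
  simp [Kernel.id, Kernel.deterministic_apply]

/-- For `a ≤ b` and `u : Π i : Iic a, X i`, the composition-product of the measure
`η_{a,b}(u)` with the trajectory kernel `ξ_b` is the pushforward of `ξ_a(u)` under
`y ↦ (π_b y, y)`. The trajectory kernels `ξ` are characterized by the fact that the
pushforward of `ξ_a` under each restriction map `π_b` is `η_{a,b}`. -/
theorem partialTraj_compProd_traj (κ : ∀ n, Kernel (Π i : Finset.Iic n, X i) (X (n + 1)))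
    [∀ n, IsMarkovKernel (κ n)]
    (ξ : ∀ n : ℕ, Kernel (Π i : Finset.Iic n, X i) (Π n, X n))
    (hξ : ∀ n, IsMarkovKernel (ξ n))
    (hchar : ∀ n b : ℕ, (ξ n).map (frestrictLe b) = partialTraj κ n b)
    {a b : ℕ} (hab : a ≤ b) (u : Π i : Finset.Iic a, X i) :
    (partialTraj κ a b u) ⊗ₘ (ξ b) = (ξ a u).map (fun x ↦ (frestrictLe b x, x)) := by
  haveI := hξ a
  haveI := hξ b
  haveI := isMarkovKernel_partialTraj κ a b
  have hmap : Measurable (fun x : Π n, X n ↦ (frestrictLe b x, x)) :=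
    (measurable_frestrictLe b).prodMk measurable_id
  refine ext_of_generate_finite _ generateFrom_prod.symm isPiSystem_prod ?_ ?_
  · rintro s ⟨t1, ht1, t2, ht2, rfl⟩
    simp only [Set.mem_setOf_eq] at ht1 ht2
    rw [Measure.compProd_apply_prod ht1 ht2, Measure.map_apply hmap ((ht1.prod ht2)),
      traj_eq_comp κ ξ hξ hchar hab u, Kernel.comp_apply' _ _ _
        (by exact (measurable_frestrictLe b ht1).inter ht2)]
    · have hpre : (fun x : Π n, X n ↦ (frestrictLe b x, x)) ⁻¹' (t1 ×ˢ t2)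
          = (frestrictLe b ⁻¹' t1) ∩ t2 := rfl
      rw [hpre]
      have hptw : ∀ y, ξ b y ((frestrictLe b ⁻¹' t1) ∩ t2)
          = t1.indicator (fun y ↦ ξ b y t2) y := by
        intro y
        have hd := traj_map_frestrictLe_self κ ξ hchar b y
        by_cases hy : y ∈ t1
        · rw [Set.indicator_of_mem hy, Set.inter_comm, measure_inter_conull]
          rw [← Set.preimage_compl, ← Measure.map_apply (measurable_frestrictLe b) ht1.compl,
            hd, Measure.dirac_apply' _ ht1.compl]
          simp [hy]
        · rw [Set.indicator_of_notMem hy]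
          refine le_antisymm ?_ zero_le
          calc ξ b y ((frestrictLe b ⁻¹' t1) ∩ t2) ≤ ξ b y (frestrictLe b ⁻¹' t1) :=
                measure_mono Set.inter_subset_left
            _ = 0 := by
                rw [← Measure.map_apply (measurable_frestrictLe b) ht1, hd,
                  Measure.dirac_apply' _ ht1]
                simp [hy]
      simp_rw [hptw]
      rw [lintegral_indicator ht1]
  · rw [Measure.compProd_apply_univ, Measure.map_apply hmap MeasurableSet.univ]
    simp
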